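/- Let Γ be a tree plan and σ ⊆ σ' ∈ Γ with deg(σ'/σ) > 0, where deg(σ'/σ) is the number of infinity-nodes τ with σ < τ ≤ σ'. Let δ = deg(σ'/σ)/deg(Γ) where deg(Γ) = max_σ I(Γ,σ). Then along finite sets X with |X| → ∞, the ratio |{a ∈ Γ(X) : π(a) = σ', b < a}| / |Γ(X)|^δ converges to A(Γ)^{-δ}, where A(Γ) is the number of nodes of Γ of maximal degree, for any fixed b with π(b) = σ. -/

import Mathlib

/-- A tree plan: a finite set of nodes of `ω^{<ω}` together with a labeling,
`lab σ = true` meaning `λ(σ) = ∞` and `lab σ = false` meaning `λ(σ) = 1`. -/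
structure TreePlan where
  nodes : Finset (List ℕ)
  lab : List ℕ → Bool

/-- The conditions making the data of a `TreePlan` an actual tree plan:
it contains the root, is closed under predecessor, and the root is not an infinity-node. -/
def IsTreePlan (Γ : TreePlan) : Prop :=
  [] ∈ Γ.nodes ∧ (∀ σ ∈ Γ.nodes, σ.dropLast ∈ Γ.nodes) ∧ Γ.lab [] = false

/-- The projection `π` forgetting the second coordinates. -/
def piX {S : Type*} (a : List (ℕ × Option S)) : List ℕ := a.map Prod.fst

/-- The tree `Γ(X)`, for `X` a set in an ambient type `S`.  Entries are pairs `(i, t)`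
where `t = none` codes `★` (at nodes with `λ = 1`) and `t = some x` with `x ∈ X`
at infinity-nodes. -/
def GammaSet (Γ : TreePlan) {S : Type*} (X : Set S) : Set (List (ℕ × Option S)) :=
  {a | piX a ∈ Γ.nodes ∧ ∀ (k : ℕ) (hk : k < a.length),
    (Γ.lab ((piX a).take (k + 1)) = false → (a.get ⟨k, hk⟩).2 = none) ∧
    (Γ.lab ((piX a).take (k + 1)) = true → ∃ x ∈ X, (a.get ⟨k, hk⟩).2 = some x)}

/-- `Γ(ω)`, realized with `X = ℕ`. -/
def GammaOmega (Γ : TreePlan) : Set (List (ℕ × Option ℕ)) :=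
  GammaSet Γ (Set.univ : Set ℕ)

/-- `Γ(n) = Γ([n])` with `[n] = {0, …, n-1} ⊆ ℕ`. -/
def GammaN (Γ : TreePlan) (n : ℕ) : Set (List (ℕ × Option ℕ)) :=
  GammaSet Γ {k : ℕ | k < n}

/-- `↓B`, the downward closure of `B` in `Γ(X)` with respect to the
initial-segment order. -/
def downSet (Γ : TreePlan) {S : Type*} (X : Set S) (B : Set (List (ℕ × Option S))) :
    Set (List (ℕ × Option S)) :=
  {a ∈ GammaSet Γ X | ∃ b ∈ B, a <+: b}

/-- The approximations to the tree closure. -/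
def tclAux (Γ : TreePlan) {S : Type*} (X : Set S) (B : Set (List (ℕ × Option S))) :
    ℕ → Set (List (ℕ × Option S))
  | 0 => insert [] (downSet Γ X B)
  | n + 1 => tclAux Γ X B n ∪
      {a ∈ GammaSet Γ X | Γ.lab (piX a) = false ∧ a.dropLast ∈ tclAux Γ X B n}

/-- The tree closure `tcl(B)` of `B ⊆ Γ(X)`. -/
def tcl (Γ : TreePlan) {S : Type*} (X : Set S) (B : Set (List (ℕ × Option S))) :
    Set (List (ℕ × Option S)) :=
  ⋃ n, tclAux Γ X B n

/-- Longest common prefix of two lists: the meet in the tree of sequences. -/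
def lcp {α : Type*} [DecidableEq α] : List α → List α → List α
  | a :: as, b :: bs => if a = b then a :: lcp as bs else []
  | _, _ => []

/-- Embedding of `L_Γ`-structures between subsets `A`, `B` of trees of sequences:
an injection preserving the order (initial segment), the root, the predecessor,
the meet, and the predicates `P_σ` (i.e. the projection `π`). -/
structure IsGEmb (Γ : TreePlan) {S T : Type*} [DecidableEq S] [DecidableEq T]
    (A : Set (List (ℕ × Option S))) (B : Set (List (ℕ × Option T)))
    (h : List (ℕ × Option S) → List (ℕ × Option T)) : Prop where
  maps : ∀ a ∈ A, h a ∈ B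
  inj : ∀ a ∈ A, ∀ b ∈ A, h a = h b → a = b
  map_root : h [] = []
  map_le : ∀ a ∈ A, ∀ b ∈ A, (a <+: b ↔ h a <+: h b)
  map_pred : ∀ a ∈ A, h a.dropLast = (h a).dropLast
  map_meet : ∀ a ∈ A, ∀ b ∈ A, h (lcp a b) = lcp (h a) (h b)
  map_P : ∀ a ∈ A, piX (h a) = piX a

open Classical in
/-- `I(Γ, σ)`: the number of infinity-nodes `τ ∈ Γ` with `τ ≤ σ`. -/
noncomputable def Icount (Γ : TreePlan) (σ : List ℕ) : ℕ :=
  (Γ.nodes.filter fun τ => Γ.lab τ = true ∧ τ <+: σ).card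

open Classical in
/-- The relative tree plan `Γ_σ = {τ : σ⌢τ ∈ Γ}` with induced labeling. -/
noncomputable def TreePlan.sub (Γ : TreePlan) (σ : List ℕ) : TreePlan where
  nodes := (Γ.nodes.filter fun τ => σ <+: τ).image (List.drop σ.length)
  lab := fun τ => if τ = [] then false else Γ.lab (σ ++ τ)

open Classical in
/-- The successors of the root of `Γ`. -/
noncomputable def rootSuccs (Γ : TreePlan) : Finset ℕ :=
  (Γ.nodes.filter fun σ => σ.length = 1).image fun σ => σ.headI

/-- `deg(Γ) = max {I(Γ,σ) : σ ∈ Γ}`. -/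
noncomputable def degPlan (Γ : TreePlan) : ℕ := Γ.nodes.sup fun σ => Icount Γ σ

open Classical in
/-- `A(Γ)`: the number of nodes of `Γ` of maximal degree. -/
noncomputable def Acoef (Γ : TreePlan) : ℕ :=
  (Γ.nodes.filter fun σ => Icount Γ σ = degPlan Γ).card

open Classical

lemma piX_length {S : Type*} (a : List (ℕ × Option S)) : (piX a).length = a.length :=
  List.length_map _

lemma prefix_nodes (Γ : TreePlan) (hΓ : IsTreePlan Γ) (τ : List ℕ) :
    τ ∈ Γ.nodes → ∀ ρ, ρ <+: τ → ρ ∈ Γ.nodes := by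
  induction τ using List.reverseRecOn with
  | nil => intro _ ρ hρ; rw [List.prefix_nil.1 hρ]; exact hΓ.1
  | append_singleton l a ih =>
    intro hτ ρ hρ
    have hl : l ∈ Γ.nodes := by simpa using hΓ.2.1 _ hτ
    rcases lt_or_eq_of_le hρ.length_le with h | h
    · apply ih hl
      have h' : ρ.length ≤ l.length := by
        simpa using Nat.lt_succ_iff.1 (by simpa using h)
      rw [List.prefix_iff_eq_take] at hρ ⊢
      rwa [List.take_append_of_le_length h'] at hρ
    · rwa [hρ.eq_of_length h]

lemma take_eq_take_of_prefix {α : Type*} {l₁ l₂ : List α} (h : l₁ <+: l₂) {m : ℕ}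
    (hm : m ≤ l₁.length) : l₂.take m = l₁.take m := by
  obtain ⟨t, rfl⟩ := h
  exact List.take_append_of_le_length hm

open Classical in
lemma fiber_card (Γ : TreePlan) (hΓ : IsTreePlan Γ) (σ σ' : List ℕ)
    (hσ' : σ' ∈ Γ.nodes) (hpre : σ <+: σ')
    (X : Finset ℕ) (b : List (ℕ × Option ℕ))
    (hb : b ∈ GammaSet Γ (↑X : Set ℕ)) (hπb : piX b = σ) :
    Nat.card {a : List (ℕ × Option ℕ) //
        a ∈ GammaSet Γ (↑X : Set ℕ) ∧ piX a = σ' ∧ b <+: a}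
      = X.card ^ (Icount Γ σ' - Icount Γ σ) ∧
    Finite {a : List (ℕ × Option ℕ) //
        a ∈ GammaSet Γ (↑X : Set ℕ) ∧ piX a = σ' ∧ b <+: a} := by
  have hlenb : b.length = σ.length := by rw [← hπb, piX_length]
  have hlen' : σ.length ≤ σ'.length := hpre.length_le
  set P : Fin σ'.length → Prop :=
    fun k => σ.length ≤ (k : ℕ) ∧ Γ.lab (σ'.take ((k : ℕ) + 1)) = true with hP
  set ι := {k : Fin σ'.length // P k} with hι
  -- the building map
  set mk : (ι → X) → List (ℕ × Option ℕ) := fun f => List.ofFn (fun k : Fin σ'.length =>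
    if h : (k : ℕ) < b.length then b.get ⟨(k : ℕ), h⟩
    else (σ'.get k, if h2 : Γ.lab (σ'.take ((k : ℕ) + 1)) = true
        then some ((f ⟨k, ⟨hlenb ▸ le_of_not_gt h, h2⟩⟩ : X) : ℕ) else none)) with hmk
  have hmklen : ∀ f, (mk f).length = σ'.length := fun f => List.length_ofFn
  have hmkget : ∀ f (k : ℕ) (hk : k < σ'.length),
      (mk f)[k]'(by rw [hmklen]; exact hk) =
      (if h : k < b.length then b.get ⟨k, h⟩
       else (σ'.get ⟨k, hk⟩, if h2 : Γ.lab (σ'.take (k + 1)) = true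
          then some ((f ⟨⟨k, hk⟩, ⟨hlenb ▸ le_of_not_gt h, h2⟩⟩ : X) : ℕ) else none)) := by
    intro f k hk
    simp only [hmk, List.getElem_ofFn]
  have hπmk : ∀ f, piX (mk f) = σ' := by
    intro f
    apply List.ext_getElem
    · rw [piX_length, hmklen]
    · intro k hk1 hk2
      rw [piX_length, hmklen] at hk1
      show (List.map Prod.fst (mk f))[k] = σ'[k]
      refine (List.getElem_map Prod.fst).trans ?_
      rw [hmkget f k hk1]
      by_cases h : k < b.length
      · rw [dif_pos h]
        have h1 : (List.map Prod.fst b)[k]'(by simpa using h) = σ[k]'(by rwa [← hlenb]) := by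
          simp only [← hπb]; rfl
        rw [List.getElem_map] at h1
        have h2 : σ[k]'(by rwa [← hlenb]) = σ'[k]'hk1 := hpre.getElem (by rwa [← hlenb])
        simpa [List.get_eq_getElem] using h1.trans h2
      · rw [dif_neg h]; rfl
  have hmkG : ∀ f, mk f ∈ GammaSet Γ (↑X : Set ℕ) := by
    intro f
    refine ⟨by rw [hπmk]; exact hσ', ?_⟩
    intro k hk
    have hk' : k < σ'.length := by rwa [hmklen] at hk
    rw [hπmk]
    simp only [List.get_eq_getElem]
    rw [hmkget f k hk']
    by_cases h : k < b.length
    · rw [dif_pos h]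
      have hk1 : k + 1 ≤ σ.length := by omega
      have htake : σ'.take (k+1) = (piX b).take (k+1) := by
        rw [hπb]; exact take_eq_take_of_prefix hpre hk1
      rw [htake]
      simpa only [List.get_eq_getElem] using hb.2 k h
    · rw [dif_neg h]
      constructor
      · intro hfalse
        rw [dif_neg (by simp [hfalse])]
      · intro h2
        exact ⟨(f ⟨⟨k, hk'⟩, ⟨hlenb ▸ le_of_not_gt h, h2⟩⟩ : X), (f _).2, by rw [dif_pos h2]⟩
  have hmkpre : ∀ f, b <+: mk f := by
    intro f
    rw [List.prefix_iff_eq_take]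
    apply List.ext_getElem
    · rw [List.length_take, hmklen]; omega
    · intro k hkb hkt
      rw [List.getElem_take]
      rw [hmkget f k (lt_of_lt_of_le (hlenb ▸ hkb) hlen')]
      rw [dif_pos hkb]; rfl
  set F : (ι → X) → {a : List (ℕ × Option ℕ) //
        a ∈ GammaSet Γ (↑X : Set ℕ) ∧ piX a = σ' ∧ b <+: a} :=
    fun f => ⟨mk f, hmkG f, hπmk f, hmkpre f⟩ with hF
  have hinj : Function.Injective F := by
    intro f g hfg
    have h1 : mk f = mk g := congrArg Subtype.val hfg
    funext i
    obtain ⟨⟨k, hk⟩, hk1, hk2⟩ := i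
    have h2 : (mk f)[k]'(by rw [hmklen]; exact hk) = (mk g)[k]'(by rw [hmklen]; exact hk) := by
      simp only [h1]
    rw [hmkget f k hk, hmkget g k hk] at h2
    have hk1' : σ.length ≤ k := hk1
    have hnb : ¬ k < b.length := by omega
    rw [dif_neg hnb, dif_neg hnb] at h2
    have h3 := congrArg Prod.snd h2
    simp only at h3
    rw [dif_pos hk2, dif_pos hk2] at h3
    exact Subtype.ext (by exact_mod_cast Option.some_injective _ h3)
  have hsurj : Function.Surjective F := by
    rintro ⟨a, haG, haπ, hab⟩
    have hlena : a.length = σ'.length := by rw [← haπ, piX_length]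
    have hex : ∀ i : ι, ∃ x, x ∈ (↑X : Set ℕ) ∧
        (a[(i.1 : ℕ)]'(by rw [hlena]; exact i.1.2)).2 = some x := by
      intro i
      have hc := (haG.2 (i.1 : ℕ) (by rw [hlena]; exact i.1.2)).2
      rw [haπ] at hc
      simpa only [List.get_eq_getElem] using hc i.2.2
    refine ⟨fun i => ⟨(hex i).choose, (hex i).choose_spec.1⟩, ?_⟩
    apply Subtype.ext
    set f0 : ι → X := fun i => ⟨(hex i).choose, (hex i).choose_spec.1⟩ with hf0
    show mk f0 = a
    apply List.ext_getElem
    · exact (hmklen f0).trans hlena.symm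
    · intro k hk1 hk2
      have hk1' : k < σ'.length := lt_of_lt_of_le hk1 (le_of_eq (hmklen f0))
      rw [hmkget f0 k hk1']
      by_cases h : k < b.length
      · rw [dif_pos h]
        simpa only [List.get_eq_getElem] using hab.getElem h
      · rw [dif_neg h]
        have hfst : (a[k]'hk2).1 = σ'[k]'hk1' := by
          have h1 : (List.map Prod.fst a)[k]'(by simpa using hk2) = σ'[k]'hk1' := by
            simp only [← haπ]; rfl
          rwa [List.getElem_map] at h1
        have hcond := haG.2 k hk2
        rw [haπ] at hcond
        simp only [List.get_eq_getElem] at hcond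
        rw [Prod.ext_iff]
        refine ⟨hfst.symm, ?_⟩
        by_cases h2 : Γ.lab (σ'.take (k+1)) = true
        · rw [dif_pos h2]
          exact ((hex ⟨⟨k, hk1'⟩, ⟨hlenb ▸ le_of_not_gt h, h2⟩⟩).choose_spec.2).symm
        · rw [dif_neg h2]
          exact (hcond.1 (by simpa using h2)).symm
  have hfin : Finite {a : List (ℕ × Option ℕ) //
      a ∈ GammaSet Γ (↑X : Set ℕ) ∧ piX a = σ' ∧ b <+: a} :=
    Finite.of_surjective F hsurj
  have hcard1 : Nat.card {a : List (ℕ × Option ℕ) //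
      a ∈ GammaSet Γ (↑X : Set ℕ) ∧ piX a = σ' ∧ b <+: a} = Nat.card (ι → X) :=
    (Nat.card_eq_of_bijective F ⟨hinj, hsurj⟩).symm
  have hcardι : Nat.card ι = Icount Γ σ' - Icount Γ σ := by
    have hc0 : Nat.card ι = (Finset.univ.filter P).card := by
      rw [hι, Nat.card_eq_fintype_card, Fintype.card_subtype]
    set S1 := Γ.nodes.filter (fun τ => Γ.lab τ = true ∧ τ <+: σ') with hS1
    set S0 := Γ.nodes.filter (fun τ => Γ.lab τ = true ∧ τ <+: σ) with hS0
    have hsub : S0 ⊆ S1 := by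
      intro ρ hρ
      simp only [hS0, hS1, Finset.mem_filter] at *
      exact ⟨hρ.1, hρ.2.1, hρ.2.2.trans hpre⟩
    have himg : (Finset.univ.filter P).image
        (fun k : Fin σ'.length => σ'.take ((k : ℕ) + 1)) = S1 \ S0 := by
      ext ρ
      simp only [Finset.mem_image, Finset.mem_filter, Finset.mem_univ, true_and,
        Finset.mem_sdiff, hS1, hS0, hP]
      constructor
      · rintro ⟨k, ⟨hk1, hk2⟩, rfl⟩
        have htp : σ'.take ((k : ℕ) + 1) <+: σ' := List.take_prefix _ _
        have hkl := k.2
        have hlen : (σ'.take ((k : ℕ) + 1)).length = (k : ℕ) + 1 := by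
          rw [List.length_take]; omega
        refine ⟨⟨prefix_nodes Γ hΓ σ' hσ' _ htp, hk2, htp⟩, ?_⟩
        rintro ⟨-, -, hps⟩
        have := hps.length_le
        rw [hlen] at this; omega
      · rintro ⟨⟨hmem, hlab, hps⟩, hns⟩
        have hρσ : ¬ ρ <+: σ := fun h => hns ⟨hmem, hlab, h⟩
        have hρne : ρ ≠ [] := by rintro rfl; exact hρσ List.nil_prefix
        have h1 : 1 ≤ ρ.length := List.length_pos_iff.2 hρne
        have h2 : ρ.length ≤ σ'.length := hps.length_le
        have h3 : σ.length < ρ.length := by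
          by_contra h
          exact hρσ (List.prefix_of_prefix_length_le hps hpre (by omega))
        have htake : σ'.take (ρ.length - 1 + 1) = ρ := by
          rw [Nat.sub_add_cancel h1]
          exact (List.prefix_iff_eq_take.1 hps).symm
        exact ⟨⟨ρ.length - 1, by omega⟩, ⟨by simp; omega, by simpa using congrArg Γ.lab htake |>.trans (by rw [hlab])⟩, htake⟩
    have hinj2 : Set.InjOn (fun k : Fin σ'.length => σ'.take ((k : ℕ) + 1))
        (Finset.univ.filter P) := by
      intro k1 _ k2 _ he
      have hk1 := k1.2
      have hk2 := k2.2
      have l1 : (σ'.take ((k1 : ℕ) + 1)).length = (k1 : ℕ) + 1 := by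
        rw [List.length_take]; omega
      have l2 : (σ'.take ((k2 : ℕ) + 1)).length = (k2 : ℕ) + 1 := by
        rw [List.length_take]; omega
      have := congrArg List.length he
      simp only at this
      rw [l1, l2] at this
      exact Fin.ext (by omega)
    have hci := Finset.card_image_of_injOn hinj2
    rw [himg, Finset.card_sdiff_of_subset hsub] at hci
    have e1 : Icount Γ σ' = S1.card := by rw [hS1]; rfl
    have e0 : Icount Γ σ = S0.card := by rw [hS0]; rfl
    rw [hc0, ← hci, e1, e0]
  refine ⟨?_, hfin⟩
  rw [hcard1, Nat.card_fun, hcardι]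
  congr 1
  simp

lemma nil_mem_gamma (Γ : TreePlan) (hΓ : IsTreePlan Γ) (X : Set ℕ) :
    [] ∈ GammaSet Γ X :=
  ⟨by simpa [piX] using hΓ.1, by intro k hk; simp at hk⟩

open Classical in
lemma Icount_nil (Γ : TreePlan) (hΓ : IsTreePlan Γ) : Icount Γ [] = 0 := by
  rw [Icount, Finset.card_eq_zero, Finset.filter_eq_empty_iff]
  intro τ hτ
  rintro ⟨hlab, hp⟩
  rw [List.prefix_nil.1 hp, hΓ.2.2] at hlab
  exact Bool.false_ne_true hlab

open Classical in
lemma gamma_card (Γ : TreePlan) (hΓ : IsTreePlan Γ) (X : Finset ℕ) :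
    Nat.card (GammaSet Γ (↑X : Set ℕ)) = ∑ τ ∈ Γ.nodes, X.card ^ Icount Γ τ ∧
    Finite (GammaSet Γ (↑X : Set ℕ)) := by
  set Fib : {τ // τ ∈ Γ.nodes} → Type := fun τ =>
    {a : List (ℕ × Option ℕ) // a ∈ GammaSet Γ (↑X : Set ℕ) ∧ piX a = ↑τ ∧ [] <+: a}
    with hFib
  have hfib : ∀ τ : {τ // τ ∈ Γ.nodes},
      Nat.card (Fib τ) = X.card ^ (Icount Γ (↑τ) - Icount Γ []) ∧ Finite (Fib τ) :=
    fun τ => fiber_card Γ hΓ [] τ τ.2 List.nil_prefix X [] (nil_mem_gamma Γ hΓ _) rfl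
  haveI hfin : ∀ τ, Finite (Fib τ) := fun τ => (hfib τ).2
  haveI : ∀ τ, Fintype (Fib τ) := fun τ => Fintype.ofFinite _
  set G : (Σ τ, Fib τ) → GammaSet Γ (↑X : Set ℕ) := fun p => ⟨p.2.1, p.2.2.1⟩ with hG
  have hGinj : Function.Injective G := by
    rintro ⟨⟨τ1, hτ1⟩, ⟨a1, ha1⟩⟩ ⟨⟨τ2, hτ2⟩, ⟨a2, ha2⟩⟩ h
    have ha : a1 = a2 := congrArg Subtype.val h
    subst ha
    have hτ : τ1 = τ2 := by
      have e1 : piX a1 = τ1 := ha1.2.1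
      have e2 : piX a1 = τ2 := ha2.2.1
      rw [← e1, ← e2]
    subst hτ
    rfl
  have hGsurj : Function.Surjective G := by
    rintro ⟨a, ha⟩
    exact ⟨⟨⟨piX a, ha.1⟩, ⟨a, ha, rfl, List.nil_prefix⟩⟩, rfl⟩
  have hfinG : Finite (GammaSet Γ (↑X : Set ℕ)) := Finite.of_surjective G hGsurj
  refine ⟨?_, hfinG⟩
  rw [← Nat.card_eq_of_bijective G ⟨hGinj, hGsurj⟩]
  rw [Nat.card_eq_fintype_card, Fintype.card_sigma]
  rw [← Finset.sum_coe_sort Γ.nodes (fun τ => X.card ^ Icount Γ τ)]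
  apply Finset.sum_congr rfl
  intro τ _
  rw [← Nat.card_eq_fintype_card, (hfib τ).1, Icount_nil Γ hΓ, Nat.sub_zero]

lemma gamma_mono (Γ : TreePlan) {X Y : Set ℕ} (h : X ⊆ Y) :
    GammaSet Γ X ⊆ GammaSet Γ Y := by
  rintro a ⟨h1, h2⟩
  refine ⟨h1, fun k hk => ⟨(h2 k hk).1, fun ht => ?_⟩⟩
  obtain ⟨x, hx, he⟩ := (h2 k hk).2 ht
  exact ⟨x, h hx, he⟩

open Filter in
lemma poly_tendsto (Γ : TreePlan) (hΓ : IsTreePlan Γ) :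
    Tendsto (fun n : ℕ => ((∑ τ ∈ Γ.nodes, n ^ Icount Γ τ : ℕ) : ℝ) / (n : ℝ) ^ degPlan Γ)
      atTop (nhds ((Acoef Γ : ℝ))) := by
  classical
  have hform : ∀ n : ℕ, ((∑ τ ∈ Γ.nodes, n ^ Icount Γ τ : ℕ) : ℝ) / (n : ℝ) ^ degPlan Γ
      = ∑ τ ∈ Γ.nodes, (n : ℝ) ^ Icount Γ τ / (n : ℝ) ^ degPlan Γ := by
    intro n
    push_cast
    rw [Finset.sum_div]
  have hAcoef : ((Acoef Γ : ℝ)) =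
      ∑ τ ∈ Γ.nodes, (if Icount Γ τ = degPlan Γ then (1 : ℝ) else 0) := by
    rw [Finset.sum_boole, Acoef]
  rw [hAcoef]
  apply Tendsto.congr (fun n => (hform n).symm)
  apply tendsto_finset_sum
  intro τ hτ
  have hle : Icount Γ τ ≤ degPlan Γ := Finset.le_sup hτ
  by_cases h : Icount Γ τ = degPlan Γ
  · rw [if_pos h, h]
    apply Tendsto.congr' _ tendsto_const_nhds
    filter_upwards [eventually_ge_atTop 1] with n hn
    rw [div_self (pow_ne_zero _ (by exact_mod_cast Nat.one_le_iff_ne_zero.1 hn))]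
  · rw [if_neg h]
    have hlt : Icount Γ τ < degPlan Γ := lt_of_le_of_ne hle h
    have hev : ∀ᶠ n : ℕ in atTop, ((n : ℝ) ^ (degPlan Γ - Icount Γ τ))⁻¹
        = (n : ℝ) ^ Icount Γ τ / (n : ℝ) ^ degPlan Γ := by
      filter_upwards [eventually_ge_atTop 1] with n hn
      have hn0 : (n : ℝ) ≠ 0 := by exact_mod_cast Nat.one_le_iff_ne_zero.1 hn
      rw [eq_div_iff (pow_ne_zero _ hn0)]
      have hsplit : (n : ℝ) ^ degPlan Γ
          = (n : ℝ) ^ (degPlan Γ - Icount Γ τ) * (n : ℝ) ^ Icount Γ τ := by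
        rw [← pow_add, Nat.sub_add_cancel hle]
      rw [hsplit, inv_mul_cancel_left₀ (pow_ne_zero _ hn0)]
    apply Tendsto.congr' hev
    apply Tendsto.inv_tendsto_atTop
    exact Tendsto.comp (tendsto_pow_atTop (by omega)) tendsto_natCast_atTop_atTop

open Filter in
lemma card_tendsto_atTop : Tendsto (fun X : Finset ℕ => X.card) atTop atTop := by
  apply Filter.tendsto_atTop.2
  intro N
  filter_upwards [Filter.eventually_ge_atTop (Finset.range N)] with X hX
  simpa using Finset.card_le_card hX

open Filter in
/-- Let `Γ` be a tree plan, `σ ⊆ σ'` nodes with `deg(σ'/σ) = I(Γ,σ') − I(Γ,σ) > 0`,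
and `δ = deg(σ'/σ)/deg(Γ)`.  For any fixed `b` with `π(b) = σ` (living in `Γ(X₀)`
for some finite `X₀ ⊆ ℕ`), along finite sets `X` with `|X| → ∞` the ratio
`|{a ∈ Γ(X) : π(a) = σ', b < a}| / |Γ(X)|^δ` converges to `A(Γ)^{-δ}`,
where `A(Γ)` is the number of nodes of `Γ` of maximal degree. -/
theorem fiber_ratio_tendsto (Γ : TreePlan) (hΓ : IsTreePlan Γ)
    (σ σ' : List ℕ) (hσ : σ ∈ Γ.nodes) (hσ' : σ' ∈ Γ.nodes) (hpre : σ <+: σ')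
    (hdeg : Icount Γ σ < Icount Γ σ')
    (X₀ : Finset ℕ) (b : List (ℕ × Option ℕ))
    (hb : b ∈ GammaSet Γ (↑X₀ : Set ℕ)) (hπb : piX b = σ) :
    Tendsto
      (fun X : Finset ℕ =>
        (Nat.card {a : List (ℕ × Option ℕ) //
            a ∈ GammaSet Γ (↑X : Set ℕ) ∧ piX a = σ' ∧ b <+: a ∧ b ≠ a} : ℝ) /
          (Nat.card (GammaSet Γ (↑X : Set ℕ)) : ℝ) ^
            (((Icount Γ σ' - Icount Γ σ : ℕ) : ℝ) / (degPlan Γ : ℝ)))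
      atTop
      (nhds ((Acoef Γ : ℝ) ^
        (-(((Icount Γ σ' - Icount Γ σ : ℕ) : ℝ) / (degPlan Γ : ℝ))))) := by
  classical
  set d := Icount Γ σ' - Icount Γ σ with hd
  set D := degPlan Γ with hD
  set δ : ℝ := (d : ℝ) / (D : ℝ) with hδ
  have hd1 : 1 ≤ d := by omega
  have hDσ' : Icount Γ σ' ≤ D := Finset.le_sup hσ'
  have hD1 : 1 ≤ D := le_trans (by omega) hDσ'
  have hDne : (D : ℝ) ≠ 0 := Nat.cast_ne_zero.2 (by omega)
  have hδ0 : (0 : ℝ) ≤ δ := by positivity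
  have hA1 : 1 ≤ Acoef Γ := by
    obtain ⟨τ, hτ, hmax⟩ :=
      Finset.exists_mem_eq_sup Γ.nodes ⟨[], hΓ.1⟩ (fun τ => Icount Γ τ)
    exact Nat.one_le_iff_ne_zero.2 (Finset.card_ne_zero_of_mem
      (Finset.mem_filter.2 ⟨hτ, hmax.symm⟩))
  have hAne : (Acoef Γ : ℝ) ≠ 0 := Nat.cast_ne_zero.2 (by omega)
  have hA0 : (0 : ℝ) ≤ (Acoef Γ : ℝ) := Nat.cast_nonneg _
  have hσne : σ ≠ σ' := by
    intro h
    rw [h] at hdeg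
    omega
  set Pn : ℕ → ℕ := fun n => ∑ τ ∈ Γ.nodes, n ^ Icount Γ τ with hPn
  have hP1 : ∀ n, 1 ≤ Pn n := by
    intro n
    calc 1 = n ^ Icount Γ [] := by rw [Icount_nil Γ hΓ, pow_zero]
    _ ≤ Pn n := Finset.single_le_sum (f := fun τ => n ^ Icount Γ τ) (fun i _ => Nat.zero_le _) hΓ.1
  have h1 := poly_tendsto Γ hΓ
  have h2 : Tendsto (fun n : ℕ => ((n : ℝ) ^ D) / (Pn n : ℝ)) atTop
      (nhds ((Acoef Γ : ℝ)⁻¹)) := by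
    have h2' := h1.inv₀ hAne
    apply h2'.congr
    intro n
    rw [inv_div]
  have hg : Tendsto (fun n : ℕ => ((n : ℝ) ^ d / (Pn n : ℝ) ^ δ)) atTop
      (nhds ((Acoef Γ : ℝ) ^ (-δ))) := by
    have heq : ∀ᶠ n : ℕ in atTop,
        ((n : ℝ) ^ D / (Pn n : ℝ)) ^ δ = (n : ℝ) ^ d / (Pn n : ℝ) ^ δ := by
      filter_upwards [eventually_ge_atTop 1] with n hn
      have hn0 : (0 : ℝ) ≤ (n : ℝ) := Nat.cast_nonneg n
      have hPpos : (0 : ℝ) < (Pn n : ℝ) := by exact_mod_cast hP1 n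
      rw [Real.div_rpow (pow_nonneg hn0 _) hPpos.le]
      congr 1
      rw [← Real.rpow_natCast (n : ℝ) D, ← Real.rpow_mul hn0]
      rw [show (D : ℝ) * δ = (d : ℝ) by rw [hδ]; field_simp]
      exact Real.rpow_natCast _ d
    refine Tendsto.congr' heq ?_
    have h3 := h2.rpow_const (p := δ) (Or.inr hδ0)
    rw [Real.rpow_neg hA0, ← Real.inv_rpow hA0]
    exact h3
  have hcomp : Tendsto (fun X : Finset ℕ => ((X.card : ℝ) ^ d / (Pn X.card : ℝ) ^ δ))
      atTop (nhds ((Acoef Γ : ℝ) ^ (-δ))) := hg.comp card_tendsto_atTop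
  refine Tendsto.congr' ?_ hcomp
  filter_upwards [eventually_ge_atTop X₀] with X hX
  have hbX : b ∈ GammaSet Γ (↑X : Set ℕ) :=
    gamma_mono Γ (by exact_mod_cast hX) hb
  have hnum : Nat.card {a : List (ℕ × Option ℕ) //
      a ∈ GammaSet Γ (↑X : Set ℕ) ∧ piX a = σ' ∧ b <+: a ∧ b ≠ a} = X.card ^ d := by
    rw [← (fiber_card Γ hΓ σ σ' hσ' hpre X b hbX hπb).1]
    apply Nat.card_congr
    apply Equiv.subtypeEquivRight
    intro a
    constructor
    · rintro ⟨h1, h2, h3, _⟩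
      exact ⟨h1, h2, h3⟩
    · rintro ⟨h1, h2, h3⟩
      refine ⟨h1, h2, h3, fun he => hσne ?_⟩
      rw [← hπb, ← h2, he]
  have hden : Nat.card (GammaSet Γ (↑X : Set ℕ)) = Pn X.card := (gamma_card Γ hΓ X).1
  rw [hnum, hden, Nat.cast_pow]
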